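/- (Reduction from incomplete to complete preferences) Fix u ≥ t. Let P be a menu selection problem with goods G = {1,…,g} and possibly incomplete preferences, and let P' be its complete embedding: add a new good g+1 and u new agents ranking g+1 first, and complete each original agent's list by placing g+1 directly after their ranked goods followed by the remaining goods in arbitrary order. Then: (1) every (t,u)-stable menu of P' contains g+1; (2) for O ⊆ G, O is (t,u)-stable for P iff O ∪ {g+1} is (t,u)-stable for P'; and hence (3) P has a (t,u)-stable menu iff P' does. -/

import Mathlib

structure MenuProblem (N G : Type) where
  pref : N → List G
  nodup : ∀ i, (pref i).Nodup

namespace MenuProblem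

variable {N G : Type} [Fintype N] [DecidableEq G]

/-- The good assigned to agent `i` when menu `O` is offered:
its favorite ranked good in `O`, if any. -/
def assigned (P : MenuProblem N G) (O : Finset G) (i : N) : Option G :=
  (P.pref i).find? (fun a => decide (a ∈ O))

/-- Number of agents assigned to good `j` when menu `O` is offered. -/
def assignedCount (P : MenuProblem N G) (O : Finset G) (j : G) : ℕ :=
  (Finset.univ.filter (fun i => P.assigned O i = some j)).card

/-- The lobby for a good `j` against menu `O`: the number of agents that
would take `j` if it were added to the menu. -/
def lobby (P : MenuProblem N G) (O : Finset G) (j : G) : ℕ :=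
  P.assignedCount (insert j O) j

/-- `|a ≻ b|`: the number of agents that would take `a` from the menu `{a, b}`. -/
def prefCount (P : MenuProblem N G) (a b : G) : ℕ :=
  P.assignedCount {a, b} a

/-- A menu is `t`-feasible if every offered good is assigned at least `t` agents. -/
def TFeasible (P : MenuProblem N G) (O : Finset G) (t : ℕ) : Prop :=
  ∀ j ∈ O, t ≤ P.assignedCount O j

/-- A menu is `u`-uncontestable if no unoffered good has a lobby of at least `u` agents. -/
def UUncontestable (P : MenuProblem N G) (O : Finset G) (u : ℕ) : Prop :=
  ∀ j ∉ O, P.lobby O j < u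

/-- A menu is `(t,u)`-stable if it is `t`-feasible and `u`-uncontestable. -/
def Stable (P : MenuProblem N G) (O : Finset G) (t u : ℕ) : Prop :=
  P.TFeasible O t ∧ P.UUncontestable O u

end MenuProblem


open Finset in
private lemma card_filter_sum_aux {α β : Type} [Fintype α] [Fintype β]
    (p : α ⊕ β → Prop) [DecidablePred p] :
    (Finset.univ.filter p).card
      = (Finset.univ.filter fun a => p (Sum.inl a)).card
        + (Finset.univ.filter fun b => p (Sum.inr b)).card := by
  rw [← Finset.card_toLeft_add_card_toRight]
  have h1 : (Finset.univ.filter p).toLeft = Finset.univ.filter (fun a => p (Sum.inl a)) := by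
    ext x; simp
  have h2 : (Finset.univ.filter p).toRight = Finset.univ.filter (fun b => p (Sum.inr b)) := by
    ext x; simp
  rw [h1, h2]

/-- Reduction from incomplete to complete preferences: fix `u ≥ t`. If `P'` is the
complete embedding of `P` — a new good `Fin.last g` and `u` new agents ranking it first,
with each original agent's list completed by placing the new good directly after their
ranked goods — then (1) every `(t,u)`-stable menu of `P'` contains the new good,
(2) `O` is `(t,u)`-stable for `P` iff `O ∪ {new good}` is `(t,u)`-stable for `P'`, and
(3) `P` has a `(t,u)`-stable menu iff `P'` does. -/
theorem complete_embedding (g t u n : ℕ) (htu : t ≤ u)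
    (P : MenuProblem (Fin n) (Fin g))
    (P' : MenuProblem (Fin n ⊕ Fin u) (Fin (g + 1)))
    (hold : ∀ i : Fin n, ∃ rest : List (Fin (g + 1)),
      P'.pref (Sum.inl i) = (P.pref i).map Fin.castSucc ++ Fin.last g :: rest)
    (holdc : ∀ (i : Fin n) (a : Fin (g + 1)), a ∈ P'.pref (Sum.inl i))
    (hnew : ∀ m : Fin u, (P'.pref (Sum.inr m)).head? = some (Fin.last g))
    (hnewc : ∀ (m : Fin u) (a : Fin (g + 1)), a ∈ P'.pref (Sum.inr m)) :
    (∀ O : Finset (Fin (g + 1)), P'.Stable O t u → Fin.last g ∈ O) ∧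
    (∀ O : Finset (Fin g), P.Stable O t u ↔
      P'.Stable
        (insert (Fin.last g) (O.map ⟨Fin.castSucc, Fin.castSucc_injective g⟩)) t u) ∧
    ((∃ O, P.Stable O t u) ↔ ∃ O', P'.Stable O' t u) := by
  classical
  set emb : Fin g ↪ Fin (g + 1) := ⟨Fin.castSucc, Fin.castSucc_injective g⟩ with hemb
  have hembapp : ∀ a : Fin g, emb a = a.castSucc := fun a => rfl
  have hne : ∀ a : Fin g, a.castSucc ≠ Fin.last g := fun a => (Fin.castSucc_lt_last a).ne
  -- new agents always take the new good whenever it is offered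
  have hB : ∀ (O'' : Finset (Fin (g + 1))), Fin.last g ∈ O'' → ∀ m : Fin u,
      P'.assigned O'' (Sum.inr m) = some (Fin.last g) := by
    intro O'' hO m
    rcases h : P'.pref (Sum.inr m) with _ | ⟨a, tl⟩
    · have := hnew m; rw [h] at this; simp at this
    · have := hnew m; rw [h] at this; simp at this
      subst this
      rw [MenuProblem.assigned, h, List.find?_cons_of_pos]
      simpa using hO
  -- membership helper
  have hmem : ∀ (a : Fin g) (S : Finset (Fin g)),
      a.castSucc ∈ insert (Fin.last g) (S.map emb) ↔ a ∈ S := by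
    intro a S
    rw [Finset.mem_insert]
    simp only [hne a, false_or]
    rw [show a.castSucc = emb a from rfl, Finset.mem_map']
  -- assignment of old agents
  have hA : ∀ (O : Finset (Fin g)) (i : Fin n),
      P'.assigned (insert (Fin.last g) (O.map emb)) (Sum.inl i)
        = some ((P.assigned O i).elim (Fin.last g) Fin.castSucc) := by
    intro O i
    obtain ⟨rest, hr⟩ := hold i
    rw [MenuProblem.assigned, hr, List.find?_append, List.find?_map]
    have hcomp : ((fun a => decide (a ∈ insert (Fin.last g) (O.map emb))) ∘ Fin.castSucc)
        = fun a : Fin g => decide (a ∈ O) := by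
      funext a
      simp only [Function.comp_apply]
      rw [decide_eq_decide]
      exact hmem a O
    rw [hcomp]
    rcases h : P.assigned O i with _ | a <;> rw [MenuProblem.assigned] at h <;> rw [h]
    · rw [Option.map_none, Option.none_or, List.find?_cons_of_pos]
      · rfl
      · simp
    · rfl
  -- counting: old goods
  have hCount : ∀ (O : Finset (Fin g)) (j : Fin g),
      P'.assignedCount (insert (Fin.last g) (O.map emb)) j.castSucc
        = P.assignedCount O j := by
    intro O j
    rw [MenuProblem.assignedCount, MenuProblem.assignedCount, card_filter_sum_aux]
    have h2 : (Finset.univ.filter fun m : Fin u =>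
        P'.assigned (insert (Fin.last g) (O.map emb)) (Sum.inr m) = some j.castSucc)
        = ∅ := by
      ext m
      simp only [Finset.mem_filter, Finset.mem_univ, true_and, Finset.notMem_empty,
        iff_false, hB _ (Finset.mem_insert_self _ _) m]
      simp [(hne j).symm]
    rw [h2, Finset.card_empty, Nat.add_zero]
    congr 1
    ext i
    simp only [Finset.mem_filter, Finset.mem_univ, true_and, hA O i]
    rcases h : P.assigned O i with _ | a
    · simp [(hne j).symm]
    · simp [Fin.castSucc_inj]
  -- counting: new good
  have hLast : ∀ O : Finset (Fin g),
      u ≤ P'.assignedCount (insert (Fin.last g) (O.map emb)) (Fin.last g) := by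
    intro O
    rw [MenuProblem.assignedCount, card_filter_sum_aux]
    have h2 : (Finset.univ.filter fun m : Fin u =>
        P'.assigned (insert (Fin.last g) (O.map emb)) (Sum.inr m) = some (Fin.last g))
        = Finset.univ := by
      ext m
      simp [hB _ (Finset.mem_insert_self _ _) m]
    rw [h2]
    simp
  -- part 1
  have part1 : ∀ O : Finset (Fin (g + 1)), P'.Stable O t u → Fin.last g ∈ O := by
    intro O hS
    by_contra hlast
    have hlt := hS.2 (Fin.last g) hlast
    have hle : u ≤ P'.lobby O (Fin.last g) := by
      rw [MenuProblem.lobby, MenuProblem.assignedCount]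
      calc u = (Finset.univ.map ⟨Sum.inr, Sum.inr_injective⟩ :
              Finset (Fin n ⊕ Fin u)).card := by simp
        _ ≤ _ := by
            apply Finset.card_le_card
            intro x hx
            simp only [Finset.mem_map, Finset.mem_univ, true_and,
              Function.Embedding.coeFn_mk] at hx
            obtain ⟨m, rfl⟩ := hx
            simp [hB _ (Finset.mem_insert_self _ _) m]
    omega
  -- part 2
  have part2 : ∀ O : Finset (Fin g), P.Stable O t u ↔
      P'.Stable (insert (Fin.last g) (O.map emb)) t u := by
    intro O
    have hlobby : ∀ k : Fin g,
        P'.lobby (insert (Fin.last g) (O.map emb)) k.castSucc = P.lobby O k := by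
      intro k
      rw [MenuProblem.lobby, MenuProblem.lobby, Finset.insert_comm,
        show k.castSucc = emb k from rfl, ← Finset.map_insert, hembapp, hCount]
    constructor
    · rintro ⟨hF, hU⟩
      constructor
      · intro j' hj'
        rcases Finset.mem_insert.mp hj' with rfl | hj'
        · exact htu.trans (hLast O)
        · obtain ⟨j, hj, rfl⟩ := Finset.mem_map.mp hj'
          rw [hembapp, hCount]
          exact hF j hj
      · intro j' hj'
        have hj'last : j' ≠ Fin.last g := by
          rintro rfl; exact hj' (Finset.mem_insert_self _ _)
        obtain ⟨k, rfl⟩ := Fin.exists_castSucc_eq.mpr hj'last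
        have hk : k ∉ O := fun hk => hj' ((hmem k O).mpr hk)
        rw [hlobby]
        exact hU k hk
    · rintro ⟨hF, hU⟩
      constructor
      · intro j hj
        rw [← hCount O j]
        exact hF j.castSucc ((hmem j O).mpr hj)
      · intro k hk
        have h1 : k.castSucc ∉ insert (Fin.last g) (O.map emb) :=
          fun h => hk ((hmem k O).mp h)
        have := hU k.castSucc h1
        rwa [hlobby] at this
  refine ⟨part1, part2, ?_⟩
  constructor
  · rintro ⟨O, hO⟩
    exact ⟨_, (part2 O).mp hO⟩
  · rintro ⟨O', hO'⟩
    have hl := part1 O' hO'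
    refine ⟨Finset.univ.filter (fun j => j.castSucc ∈ O'), ?_⟩
    rw [part2]
    have heq : insert (Fin.last g)
        ((Finset.univ.filter fun j => j.castSucc ∈ O').map emb) = O' := by
      ext x
      by_cases hx : x = Fin.last g
      · simp [hx, hl]
      · obtain ⟨y, rfl⟩ := Fin.exists_castSucc_eq.mpr hx
        rw [hmem y]
        simp
    rw [heq]
    exact hO'
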